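/- arXiv:1310.7656 — 2 statements merged into one kernel-verified Lean document; each statement's English description precedes it below -/
import Mathlib

section
/- Let Λ be a row-finite k-graph with no sources and suppose μ, ν ∈ Λ satisfy s(μ) = s(ν). Then μ ∼ ν if and only if MCE(μτ, ντ) ≠ ∅ for every τ ∈ s(μ)Λ. -/
open scoped BigOperators

/-- A `k`-graph: a countable category with degree functor `d : Λ → ℕ^k`
satisfying the factorisation property.  Composition `comp μ ν` is only
meaningful when `s μ = r ν`. -/
structure KGraph (k : ℕ) where
  Path : Type
  countable : Countable Path
  r : Path → Path
  s : Path → Path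
  d : Path → (Fin k → ℕ)
  comp : Path → Path → Path
  d_r : ∀ l, d (r l) = 0
  d_s : ∀ l, d (s l) = 0
  r_of_vertex : ∀ v, d v = 0 → r v = v
  s_of_vertex : ∀ v, d v = 0 → s v = v
  id_comp : ∀ l, comp (r l) l = l
  comp_id : ∀ l, comp l (s l) = l
  r_comp : ∀ μ ν, s μ = r ν → r (comp μ ν) = r μ
  s_comp : ∀ μ ν, s μ = r ν → s (comp μ ν) = s ν
  d_comp : ∀ μ ν, s μ = r ν → d (comp μ ν) = d μ + d ν
  comp_assoc : ∀ l μ ν, s l = r μ → s μ = r ν →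
    comp (comp l μ) ν = comp l (comp μ ν)
  factor : ∀ (l : Path) (m n : Fin k → ℕ), d l = m + n →
    ∃! p : Path × Path, d p.1 = m ∧ d p.2 = n ∧ s p.1 = r p.2 ∧ comp p.1 p.2 = l

namespace KGraph

variable {k : ℕ} (G : KGraph k)

def IsVertex (v : G.Path) : Prop := G.d v = 0

/-- `MCE μ ν = μΛ ∩ νΛ ∩ Λ^{d μ ⊔ d ν}`. -/
def MCE (μ ν : G.Path) : Set G.Path :=
  {l | G.d l = G.d μ ⊔ G.d ν ∧
      (∃ α, G.s μ = G.r α ∧ G.comp μ α = l) ∧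
      (∃ β, G.s ν = G.r β ∧ G.comp ν β = l)}

def FinitelyAligned : Prop := ∀ μ ν : G.Path, (G.MCE μ ν).Finite

/-- `Ext(μ; E) = ⋃_{ν ∈ E} {α : μα ∈ MCE(μ,ν)}`. -/
def Ext (μ : G.Path) (E : Set G.Path) : Set G.Path :=
  {α | G.s μ = G.r α ∧ ∃ ν ∈ E, G.comp μ α ∈ G.MCE μ ν}

/-- `Ext` computed relative to a sub-`k`-graph with path set `W`. -/
def ExtIn (W : Set G.Path) (μ : G.Path) (E : Set G.Path) : Set G.Path :=
  {α | G.s μ = G.r α ∧ ∃ ν ∈ E, G.comp μ α ∈ G.MCE μ ν ∩ W}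

/-- `E` is exhaustive at `v` relative to the sub-`k`-graph with path set `W`. -/
def ExhaustiveIn (W : Set G.Path) (v : G.Path) (E : Set G.Path) : Prop :=
  ∀ l ∈ W, G.r l = v → ∃ μ ∈ E, (G.MCE l μ ∩ W).Nonempty

def Exhaustive (v : G.Path) (E : Set G.Path) : Prop := G.ExhaustiveIn Set.univ v E

/-- Membership in `FE` of the sub-`k`-graph with path set `W`. -/
def IsFEIn (W : Set G.Path) (E : Set G.Path) : Prop :=
  E.Finite ∧ E ⊆ W ∧ (∀ μ ∈ E, ¬ G.IsVertex μ) ∧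
    ∃ v, G.IsVertex v ∧ (∀ μ ∈ E, G.r μ = v) ∧ G.ExhaustiveIn W v E

def IsFE (E : Set G.Path) : Prop := G.IsFEIn Set.univ E

/-- A satiated collection of finite exhaustive sets, relative to the sub-`k`-graph `W`. -/
def SatiatedIn (W : Set G.Path) (Ε : Set (Set G.Path)) : Prop :=
  (∀ E ∈ Ε, G.IsFEIn W E) ∧
  ∀ F ∈ Ε, ∀ v, G.IsVertex v → (∀ μ ∈ F, G.r μ = v) →
    ((∀ l ∈ W, G.r l = v → l ≠ v → insert l F ∈ Ε) ∧
     (∀ l ∈ W, G.r l = v →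
        (¬ ∃ μ ∈ F, ∃ μ', G.s μ = G.r μ' ∧ G.comp μ μ' = l) →
        G.ExtIn W l F ∈ Ε) ∧
     (∀ lam lam', lam ∈ F → G.s lam = G.r lam' → G.comp lam lam' ∈ F →
        lam' ≠ G.s lam → F \ {G.comp lam lam'} ∈ Ε) ∧
     (∀ lam ∈ F, ∀ Gs ∈ Ε, (∀ μ ∈ Gs, G.r μ = G.s lam) →
        ((F \ {lam}) ∪ (G.comp lam) '' Gs) ∈ Ε))

def Satiated (Ε : Set (Set G.Path)) : Prop := G.SatiatedIn Set.univ Ε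

end KGraph

/-- A normalised `𝕋`-valued categorical `2`-cocycle on a `k`-graph, with the
circle realised as the norm-one complex numbers. -/
structure KGraph.Cocycle {k : ℕ} (G : KGraph k) where
  c : G.Path → G.Path → ℂ
  norm_one : ∀ μ ν, G.s μ = G.r ν → ‖c μ ν‖ = 1
  cocycle : ∀ l μ ν, G.s l = G.r μ → G.s μ = G.r ν →
    c l μ * c (G.comp l μ) ν = c μ ν * c l (G.comp μ ν)
  left_id : ∀ l, c (G.r l) l = 1
  right_id : ∀ l, c l (G.s l) = 1

namespace KGraph

variable {k : ℕ} (G : KGraph k)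

section CStar

variable {A : Type*} [NonUnitalNormedRing A] [StarRing A] [CStarRing A]
  [NormedSpace ℂ A] [IsScalarTower ℂ A A] [SMulCommClass ℂ A A]
  [StarModule ℂ A] [CompleteSpace A]

/-- Toeplitz–Cuntz–Krieger `(Λ, c)`-family. -/
def IsTCK (σ : G.Cocycle) (t : G.Path → A) : Prop :=
  (∀ v, G.IsVertex v → star (t v) = t v ∧ t v * t v = t v) ∧
  (∀ v w, G.IsVertex v → G.IsVertex w → v ≠ w → t v * t w = 0) ∧
  (∀ μ ν, G.s μ = G.r ν → t μ * t ν = σ.c μ ν • t (G.comp μ ν)) ∧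
  (∀ l, star (t l) * t l = t (G.s l)) ∧
  (∀ μ ν (F : Finset G.Path), (F : Set G.Path) = G.MCE μ ν →
    (t μ * star (t μ)) * (t ν * star (t ν)) = ∑ l ∈ F, t l * star (t l))

open scoped Classical in
/-- `Δ(t)^F = ∏_{l ∈ F} (q_v - q_l)`; the factors commute for a TCK family, so the
`noncommProd` below is the product from the paper.  The product is computed in the
unitization (with a harmless prefactor `q_v`, which acts as the identity on each
factor for a TCK family with `F ⊆ vΛ`), so that the empty product is `q_v`. -/
noncomputable def Delta (t : G.Path → A) (v : G.Path) (F : Finset G.Path) : A :=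
  if h : (F : Set G.Path).Pairwise (Function.onFun Commute fun l =>
      ((t v * star (t v) - t l * star (t l) : A) : Unitization ℂ A))
  then (((t v * star (t v) : A) : Unitization ℂ A) *
      F.noncommProd (fun l => ((t v * star (t v) - t l * star (t l) : A) : Unitization ℂ A)) h).snd
  else 0

/-- Relative Cuntz–Krieger `(Λ, c; Ε)`-family. -/
def IsRelCK (σ : G.Cocycle) (Ε : Set (Set G.Path)) (t : G.Path → A) : Prop :=
  G.IsTCK σ t ∧ ∀ (F : Finset G.Path) (v : G.Path), (F : Set G.Path) ∈ Ε →
    G.IsVertex v → (∀ μ ∈ F, G.r μ = v) → G.Delta t v F = 0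

/-- Cuntz–Krieger `(Λ, c)`-family (finitely aligned case). -/
def IsCK (σ : G.Cocycle) (t : G.Path → A) : Prop :=
  G.IsRelCK σ {E | G.IsFE E} t

/-- The `C*`-subalgebra of `A` generated by a family `t`, as a subset of `A`. -/
def cstarOf (t : G.Path → A) : Set A :=
  closure (↑(NonUnitalStarAlgebra.adjoin ℂ (Set.range t)) : Set A)

end CStar

/-- Row-finite with no sources: every `vΛ^n` is finite and nonempty. -/
def RowFiniteNoSources : Prop :=
  ∀ v, G.IsVertex v → ∀ n : Fin k → ℕ,
    {l | G.r l = v ∧ G.d l = n}.Finite ∧ {l | G.r l = v ∧ G.d l = n}.Nonempty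

section CStar2

variable {A : Type*} [NonUnitalNormedRing A] [StarRing A] [CStarRing A]
  [NormedSpace ℂ A] [IsScalarTower ℂ A A] [SMulCommClass ℂ A A]
  [StarModule ℂ A] [CompleteSpace A]

/-- Cuntz–Krieger family, row-finite no sources formulation:
`∑_{λ ∈ vΛ^n} t_λ t_λ* = t_v`. -/
def IsCKrf (σ : G.Cocycle) (t : G.Path → A) : Prop :=
  G.IsTCK σ t ∧ ∀ v (n : Fin k → ℕ) (F : Finset G.Path), G.IsVertex v →
    (F : Set G.Path) = {l | G.r l = v ∧ G.d l = n} →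
    ∑ l ∈ F, t l * star (t l) = t v

end CStar2

/-- A filter in a `k`-graph. -/
def IsFilter (S : Set G.Path) : Prop :=
  (∀ l, (∃ α, G.s l = G.r α ∧ G.comp l α ∈ S) → l ∈ S) ∧
  (∀ μ ∈ S, ∀ ν ∈ S, (G.MCE μ ν ∩ S).Nonempty)

/-- An ultrafilter: a filter meeting every `Λ^n`. -/
def IsUltrafilter (S : Set G.Path) : Prop :=
  G.IsFilter S ∧ ∀ n : Fin k → ℕ, ∃ l ∈ S, G.d l = n

/-- `ℓ_μ(S) = {ν : νΛ ∩ μS ≠ ∅}`. -/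
def lmap (μ : G.Path) (S : Set G.Path) : Set G.Path :=
  {ν | ∃ τ ∈ S, G.s μ = G.r τ ∧ ∃ α, G.s ν = G.r α ∧ G.comp ν α = G.comp μ τ}

/-- `μ ∼ ν`: `ℓ_μ(S) = ℓ_ν(S)` for every ultrafilter `S` with `r(S) = s(μ)`. -/
def PEquiv (μ ν : G.Path) : Prop :=
  ∀ S, G.IsUltrafilter S → G.s μ ∈ S → G.lmap μ S = G.lmap ν S

/-- `d` with values in `ℤ^k`. -/
def dZ (l : G.Path) : Fin k → ℤ := fun i => (G.d l i : ℤ)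

/-- `Per(Λ) ≤ ℤ^k`, generated by `{d(μ) - d(ν) : μ ∼ ν}`. -/
def PerGroup : AddSubgroup (Fin k → ℤ) :=
  AddSubgroup.closure
    {m | ∃ μ ν, G.s μ = G.s ν ∧ G.PEquiv μ ν ∧ m = G.dZ μ - G.dZ ν}

/-- The hereditary set `H_Per`. -/
def HPer : Set G.Path :=
  {v | G.IsVertex v ∧ ∀ m n : Fin k → ℕ,
    ((fun i => (m i : ℤ)) - fun i => (n i : ℤ)) ∈ G.PerGroup →
    ∀ l, G.r l = v → G.d l = m →
      ∃ μ, G.r μ = v ∧ G.d μ = n ∧ G.s μ = G.s l ∧ G.PEquiv l μ}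

end KGraph


namespace KGraph

variable {k : ℕ} (G : KGraph k)

lemma comp_eq_of_deg_zero {l α : G.Path} (h0 : G.d α = 0) (hr : G.s l = G.r α) :
    G.comp l α = l := by
  have hα : α = G.s l := (G.r_of_vertex α h0).symm.trans hr.symm
  rw [hα, G.comp_id]

lemma exists_initseg {l : G.Path} {n : Fin k → ℕ} (h : ∀ i, n i ≤ G.d l i) :
    ∃ a b, G.d a = n ∧ G.s a = G.r b ∧ G.comp a b = l := by
  obtain ⟨⟨a, b⟩, ⟨h1, h2, h3, h4⟩, -⟩ := G.factor l n (fun i => G.d l i - n i)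
    (by funext i; have := h i; simp only [Pi.add_apply]; omega)
  exact ⟨a, b, h1, h3, h4⟩

lemma prefix_of_prefix {lam c e c' e' : G.Path}
    (h1 : G.s c = G.r e) (h2 : G.comp c e = lam)
    (h3 : G.s c' = G.r e') (h4 : G.comp c' e' = lam)
    (h5 : ∀ i, G.d c' i ≤ G.d c i) :
    ∃ δ, G.s c' = G.r δ ∧ G.comp c' δ = c := by
  obtain ⟨⟨c1, c2⟩, ⟨hd1, hd2, hsr, hcomp⟩, -⟩ := G.factor c (G.d c')
      (fun i => G.d c i - G.d c' i)
      (by funext i; have := h5 i; simp only [Pi.add_apply]; omega)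
  have hsc2 : G.s c2 = G.r e := by
    rw [← G.s_comp c1 c2 hsr, hcomp]; exact h1
  have hdlam : G.d lam = G.d c' + (G.d c2 + G.d e) := by
    rw [← h2, G.d_comp c e h1, ← hcomp, G.d_comp c1 c2 hsr, hd1, add_assoc]
  obtain ⟨p0, -, hup⟩ := G.factor lam (G.d c') (G.d c2 + G.d e) hdlam
  have hsr' : G.s c1 = G.r (G.comp c2 e) := by rw [G.r_comp c2 e hsc2]; exact hsr
  have hcomp' : G.comp c1 (G.comp c2 e) = lam := by
    rw [← G.comp_assoc c1 c2 e hsr hsc2, hcomp, h2]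
  have hde' : G.d e' = G.d c2 + G.d e := by
    have h6 : G.d lam = G.d c' + G.d e' := by rw [← h4, G.d_comp c' e' h3]
    funext i
    have t1 := congrFun h6 i; have t2 := congrFun hdlam i
    simp only [Pi.add_apply] at t1 t2 ⊢; omega
  have heq : ((c1, G.comp c2 e) : G.Path × G.Path) = (c', e') :=
    (hup (c1, G.comp c2 e) ⟨hd1, G.d_comp c2 e hsc2, hsr', hcomp'⟩).trans
      (hup (c', e') ⟨rfl, hde', h3, h4⟩).symm
  have hc1 : c1 = c' := congrArg Prod.fst heq
  exact ⟨c2, hc1 ▸ hsr, hc1 ▸ hcomp⟩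

lemma mce_of_common_ext {a p b q lam : G.Path}
    (hap : G.s a = G.r p) (ha : G.comp a p = lam)
    (hbq : G.s b = G.r q) (hb : G.comp b q = lam) :
    ∃ e t, e ∈ G.MCE a b ∧ G.s e = G.r t ∧ G.comp e t = lam := by
  have hdla : G.d lam = G.d a + G.d p := by rw [← ha, G.d_comp a p hap]
  have hdlb : G.d lam = G.d b + G.d q := by rw [← hb, G.d_comp b q hbq]
  have hle : ∀ i, (G.d a ⊔ G.d b) i ≤ G.d lam i := by
    intro i
    have t1 := congrFun hdla i; have t2 := congrFun hdlb i
    rw [Pi.sup_apply]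
    refine sup_le ?_ ?_ <;> simp only [Pi.add_apply] at t1 t2 <;> omega
  obtain ⟨e, t, hde, hset, hcet⟩ := G.exists_initseg hle
  obtain ⟨δa, hδa1, hδa2⟩ := G.prefix_of_prefix hset hcet hap ha
    (fun i => by rw [hde, Pi.sup_apply]; exact le_sup_left)
  obtain ⟨δb, hδb1, hδb2⟩ := G.prefix_of_prefix hset hcet hbq hb
    (fun i => by rw [hde, Pi.sup_apply]; exact le_sup_right)
  exact ⟨e, t, ⟨hde, ⟨δa, hδa1, hδa2⟩, ⟨δb, hδb1, hδb2⟩⟩, hset, hcet⟩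

lemma ultra_r {S : Set G.Path} (hS : G.IsUltrafilter S) {v : G.Path} (hv0 : G.d v = 0)
    (hv : v ∈ S) : ∀ l ∈ S, G.r l = v := by
  intro l hl
  obtain ⟨e, ⟨-, ⟨α, hα1, hα2⟩, ⟨β, hβ1, hβ2⟩⟩, -⟩ := hS.1.2 l hl v hv
  have h1 : G.r e = G.r l := by rw [← hα2, G.r_comp l α hα1]
  have h2 : G.r e = v := by rw [← hβ2, G.r_comp v β hβ1, G.r_of_vertex v hv0]
  rw [← h1, h2]

lemma ultra_ext {S : Set G.Path} (hS : G.IsUltrafilter S) {a b : G.Path}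
    (ha : a ∈ S) (hb : b ∈ S) (hab : ∀ i, G.d a i ≤ G.d b i) :
    ∃ γ, G.s a = G.r γ ∧ G.comp a γ = b := by
  obtain ⟨e, ⟨hde, ⟨α, hα1, hα2⟩, ⟨β, hβ1, hβ2⟩⟩, -⟩ := hS.1.2 a ha b hb
  have hdsup : G.d a ⊔ G.d b = G.d b := by
    funext i; rw [Pi.sup_apply]; exact sup_eq_right.mpr (hab i)
  have h2 : G.d b + G.d β = G.d b := by
    rw [← G.d_comp b β hβ1, hβ2, hde, hdsup]
  have hdβ : G.d β = 0 := by
    funext i; have := congrFun h2 i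
    simp only [Pi.add_apply, Pi.zero_apply] at this ⊢; omega
  have he : e = b := by rw [← hβ2, G.comp_eq_of_deg_zero hdβ hβ1]
  exact ⟨α, hα1, he ▸ hα2⟩

lemma lmap_subset {μ ν : G.Path} (hs : G.s μ = G.s ν)
    (H : ∀ τ, G.r τ = G.s μ → (G.MCE (G.comp μ τ) (G.comp ν τ)).Nonempty)
    {S : Set G.Path} (hS : G.IsUltrafilter S) (hv : G.s μ ∈ S) :
    G.lmap μ S ⊆ G.lmap ν S := by
  have hv0 : G.d (G.s μ) = 0 := G.d_s μ
  rintro ρ ⟨τ, hτS, hrτ, α, hsρ, hcomp⟩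
  obtain ⟨x, hxS, hdx⟩ := hS.2 (G.d τ + G.d ρ)
  obtain ⟨γ, hsτγ, hτγ⟩ := G.ultra_ext hS hτS hxS
    (fun i => by rw [hdx, Pi.add_apply]; omega)
  have hrx : G.r x = G.s μ := G.ultra_r hS hv0 hv x hxS
  obtain ⟨lam, hdlam, ⟨β, hβ1, hβ2⟩, ⟨β', hβ'1, hβ'2⟩⟩ := H x hrx
  have hsα : G.s α = G.r γ := by
    rw [← G.s_comp ρ α hsρ, hcomp, G.s_comp μ τ hrτ]; exact hsτγ
  have e1 : G.comp μ x = G.comp ρ (G.comp α γ) := by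
    rw [← hτγ, ← G.comp_assoc μ τ γ hrτ hsτγ, ← hcomp, G.comp_assoc ρ α γ hsρ hsα]
  have hsμx : G.s μ = G.r x := hrx.symm
  have hsx : G.s x = G.r β := by rw [← G.s_comp μ x hsμx]; exact hβ1
  have hsγ : G.s γ = G.r β := by rw [← G.s_comp τ γ hsτγ, hτγ]; exact hsx
  have hsαγ : G.s (G.comp α γ) = G.r β := by rw [G.s_comp α γ hsα]; exact hsγ
  have hsραγ : G.s ρ = G.r (G.comp α γ) := by rw [G.r_comp α γ hsα]; exact hsρ
  have e2 : G.comp ρ (G.comp (G.comp α γ) β) = lam := by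
    rw [← G.comp_assoc ρ (G.comp α γ) β hsραγ hsαγ, ← e1]; exact hβ2
  have hsρE : G.s ρ = G.r (G.comp (G.comp α γ) β) := by
    rw [G.r_comp (G.comp α γ) β hsαγ]; exact hsραγ
  have hsνx : G.s ν = G.r x := by rw [← hs]; exact hsμx
  have hdle : ∀ i, G.d ρ i ≤ G.d (G.comp ν x) i := by
    intro i
    rw [G.d_comp ν x hsνx, Pi.add_apply, hdx, Pi.add_apply]; omega
  obtain ⟨δ, hδ1, hδ2⟩ := G.prefix_of_prefix hβ'1 hβ'2 hsρE e2 hdle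
  exact ⟨x, hxS, hsνx, δ, hδ1, hδ2⟩

end KGraph

/-- The chain of paths extending `τ` obtained by repeatedly appending
a path of degree `(1,…,1)` chosen by `ext`. -/
def KGraph.chain {k : ℕ} (G : KGraph k) (ext : G.Path → G.Path) (τ : G.Path) : ℕ → G.Path
  | 0 => τ
  | n + 1 => G.comp (G.chain ext τ n) (ext (G.s (G.chain ext τ n)))

/-- `μ ∼ ν` iff `MCE(μτ, ντ) ≠ ∅` for every `τ ∈ s(μ)Λ`. -/
theorem stmt16 {k : ℕ} (G : KGraph k) (hrf : G.RowFiniteNoSources)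
    (μ ν : G.Path) (hs : G.s μ = G.s ν) :
    G.PEquiv μ ν ↔
      ∀ τ : G.Path, G.r τ = G.s μ →
        (G.MCE (G.comp μ τ) (G.comp ν τ)).Nonempty := by
  constructor
  · intro hPE τ hrτ
    classical
    have hone : ∀ v : G.Path, ∃ l, G.IsVertex v → (G.r l = v ∧ G.d l = fun _ => 1) := by
      intro v
      by_cases h : G.IsVertex v
      · obtain ⟨l, hl⟩ := (hrf v h (fun _ => 1)).2
        exact ⟨l, fun _ => hl⟩
      · exact ⟨v, fun h' => absurd h' h⟩
    choose ext hext using hone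
    set c : ℕ → G.Path := G.chain ext τ with hc
    have hc0 : c 0 = τ := rfl
    have hcsucc : ∀ n, c (n + 1) = G.comp (c n) (ext (G.s (c n))) := fun n => rfl
    have hvx : ∀ l : G.Path, G.IsVertex (G.s l) := fun l => G.d_s l
    have hre : ∀ l : G.Path, G.s l = G.r (ext (G.s l)) := fun l => ((hext _ (hvx l)).1).symm
    have hde1 : ∀ (l : G.Path) (i : Fin k), G.d (ext (G.s l)) i = 1 :=
      fun l i => congrFun ((hext _ (hvx l)).2) i
    have hdc : ∀ n i, G.d (c n) i = G.d τ i + n := by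
      intro n
      induction n with
      | zero => intro i; rfl
      | succ n ih =>
        intro i
        rw [hcsucc, G.d_comp _ _ (hre (c n)), Pi.add_apply, ih i, hde1 (c n) i]
        omega
    have hchain : ∀ m n, m ≤ n → ∃ γ, G.s (c m) = G.r γ ∧ G.comp (c m) γ = c n := by
      intro m n hmn
      induction n, hmn using Nat.le_induction with
      | base => exact ⟨G.s (c m), (G.r_of_vertex _ (G.d_s _)).symm, G.comp_id _⟩
      | succ n hmn ih =>
        obtain ⟨γ, h1, h2⟩ := ih
        have hsγ : G.s γ = G.r (ext (G.s (c n))) := by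
          rw [← G.s_comp (c m) γ h1, h2]; exact hre (c n)
        refine ⟨G.comp γ (ext (G.s (c n))), ?_, ?_⟩
        · rw [G.r_comp _ _ hsγ]; exact h1
        · rw [← G.comp_assoc (c m) γ _ h1 hsγ, h2, hcsucc]
    set S : Set G.Path := {l | ∃ n δ, G.s l = G.r δ ∧ G.comp l δ = c n} with hSdef
    have hmemS : ∀ n, c n ∈ S := fun n =>
      ⟨n, G.s (c n), (G.r_of_vertex _ (G.d_s _)).symm, G.comp_id _⟩
    have hF1 : ∀ l, (∃ α, G.s l = G.r α ∧ G.comp l α ∈ S) → l ∈ S := by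
      rintro l ⟨α, hα, n, δ, hδ1, hδ2⟩
      have hsαδ : G.s α = G.r δ := by rw [← G.s_comp l α hα]; exact hδ1
      exact ⟨n, G.comp α δ, by rw [G.r_comp α δ hsαδ]; exact hα,
        by rw [← G.comp_assoc l α δ hα hsαδ]; exact hδ2⟩
    have hF2 : ∀ a ∈ S, ∀ b ∈ S, (G.MCE a b ∩ S).Nonempty := by
      rintro a ⟨m, p, hp1, hp2⟩ b ⟨n, q, hq1, hq2⟩
      obtain ⟨γ, hγ1, hγ2⟩ := hchain m (max m n) (le_max_left m n)
      obtain ⟨γ', hγ'1, hγ'2⟩ := hchain n (max m n) (le_max_right m n)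
      have hsp : G.s p = G.r γ := by rw [← G.s_comp a p hp1, hp2]; exact hγ1
      have hsq : G.s q = G.r γ' := by rw [← G.s_comp b q hq1, hq2]; exact hγ'1
      have ha2 : G.comp a (G.comp p γ) = c (max m n) := by
        rw [← G.comp_assoc a p γ hp1 hsp, hp2]; exact hγ2
      have hb2 : G.comp b (G.comp q γ') = c (max m n) := by
        rw [← G.comp_assoc b q γ' hq1 hsq, hq2]; exact hγ'2
      have hsa : G.s a = G.r (G.comp p γ) := by rw [G.r_comp p γ hsp]; exact hp1
      have hsb : G.s b = G.r (G.comp q γ') := by rw [G.r_comp q γ' hsq]; exact hq1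
      obtain ⟨e, t, heM, het, hect⟩ := G.mce_of_common_ext hsa ha2 hsb hb2
      exact ⟨e, heM, max m n, t, het, hect⟩
    have hUF : G.IsUltrafilter S := by
      refine ⟨⟨hF1, hF2⟩, ?_⟩
      intro n
      obtain ⟨N, hN⟩ : ∃ N : ℕ, ∀ i, n i ≤ N :=
        ⟨Finset.univ.sup n, fun i => Finset.le_sup (Finset.mem_univ i)⟩
      have hle : ∀ i, n i ≤ G.d (c N) i := by
        intro i; rw [hdc N i]; have := hN i; omega
      obtain ⟨a, b, hda, hsab, hab⟩ := G.exists_initseg hle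
      exact ⟨a, ⟨N, b, hsab, hab⟩, hda⟩
    have hvS : G.s μ ∈ S := by
      have hrv : G.r τ ∈ S :=
        ⟨0, τ, G.s_of_vertex _ (G.d_r τ), by rw [hc0]; exact G.id_comp τ⟩
      rwa [hrτ] at hrv
    have heq := hPE S hUF hvS
    have hτS : τ ∈ S := by rw [← hc0]; exact hmemS 0
    have hμτ : G.comp μ τ ∈ G.lmap μ S :=
      ⟨τ, hτS, hrτ.symm, G.s (G.comp μ τ),
        (G.r_of_vertex _ (G.d_s _)).symm, G.comp_id _⟩
    rw [heq] at hμτ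
    obtain ⟨τ', hτ'S, hsντ', α, hα1, hα2⟩ := hμτ
    obtain ⟨qn, δ, hδ1, hδ2⟩ := hτ'S
    obtain ⟨γ, hγa, hγb⟩ := hchain 0 qn (Nat.zero_le qn)
    have hsτγ : G.s τ = G.r γ := by rw [← hc0]; exact hγa
    have hτγ : G.comp τ γ = c qn := by rw [← hc0]; exact hγb
    have hsντ : G.s ν = G.r τ := by rw [← hs]; exact hrτ.symm
    have hb2 : G.comp (G.comp ν τ) γ = G.comp ν (c qn) := by
      rw [G.comp_assoc ν τ γ hsντ hsτγ, hτγ]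
    have hsb : G.s (G.comp ν τ) = G.r γ := by rw [G.s_comp ν τ hsντ]; exact hsτγ
    have hsα : G.s α = G.r δ := by
      rw [← G.s_comp (G.comp μ τ) α hα1, hα2, G.s_comp ν τ' hsντ']; exact hδ1
    have ha2 : G.comp (G.comp μ τ) (G.comp α δ) = G.comp ν (c qn) := by
      rw [← G.comp_assoc (G.comp μ τ) α δ hα1 hsα, hα2,
        G.comp_assoc ν τ' δ hsντ' hδ1, hδ2]
    have hsa : G.s (G.comp μ τ) = G.r (G.comp α δ) := by
      rw [G.r_comp α δ hsα]; exact hα1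
    obtain ⟨e, t, heM, -, -⟩ := G.mce_of_common_ext hsa ha2 hsb hb2
    exact ⟨e, heM⟩
  · intro H S hS hv
    have H' : ∀ τ, G.r τ = G.s ν → (G.MCE (G.comp ν τ) (G.comp μ τ)).Nonempty := by
      intro τ hτ
      obtain ⟨l, hd, h1, h2⟩ := H τ (by rw [hs]; exact hτ)
      exact ⟨l, by rw [sup_comm]; exact hd, h2, h1⟩
    have hv' : G.s ν ∈ S := by rw [← hs]; exact hv
    exact Set.Subset.antisymm (G.lmap_subset hs H hS hv) (G.lmap_subset hs.symm H' hS hv')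
end

section
/- Let Λ be a row-finite k-graph with no sources, let c be a T-valued 2-cocycle on Λ, and let t be a Cuntz–Krieger (Λ,c)-family in a C*-algebra (i.e. a Toeplitz–Cuntz–Krieger (Λ,c)-family with Σ_{λ ∈ vΛ^n} t_λ t_λ* = t_v for all v ∈ Λ^0 and n ∈ ℕ^k). Let λ ∈ Λ, set v := r(λ), let p, q ∈ ℕ^k, and let θ : vΛ^p → vΛ^q be a bijection such that μ ∼ θ(μ) for all μ ∈ vΛ^p. Then V := Σ_{μ ∈ vΛ^p} t_λ t_λ* t_μ t_{θ(μ)}* satisfies V V* = V* V = t_λ t_λ*; that is, V is a unitary element of the corner (t_λ t_λ*) C*(t) (t_λ t_λ*). -/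
open scoped BigOperators

namespace KGraph

variable {k : ℕ} {G : KGraph k}

/-- `μ` is an initial segment (prefix) of `l`. -/
def Pfx (G : KGraph k) (μ l : G.Path) : Prop :=
  ∃ β, G.s μ = G.r β ∧ G.comp μ β = l

lemma factor_unique {l : G.Path} {m n : Fin k → ℕ} (h : G.d l = m + n)
    {a x b y : G.Path} (ha : G.d a = m) (hx : G.d x = n) (hax : G.s a = G.r x)
    (hcomp : G.comp a x = l) (hb : G.d b = m) (hy : G.d y = n)
    (hby : G.s b = G.r y) (hcomp' : G.comp b y = l) : a = b ∧ x = y := by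
  obtain ⟨pp, -, hu⟩ := G.factor l m n h
  have h1 := hu (a, x) ⟨ha, hx, hax, hcomp⟩
  have h2 := hu (b, y) ⟨hb, hy, hby, hcomp'⟩
  refine ⟨?_, ?_⟩
  · exact congrArg Prod.fst (h1.trans h2.symm)
  · exact congrArg Prod.snd (h1.trans h2.symm)

lemma nest {a x b y : G.Path} (hax : G.s a = G.r x) (hby : G.s b = G.r y)
    (heq : G.comp a x = G.comp b y) (hle : ∀ i, G.d a i ≤ G.d b i) :
    ∃ z, G.s a = G.r z ∧ G.comp a z = b ∧ G.d z = G.d b - G.d a := by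
  have h1 : G.d a + G.d x = G.d b + G.d y := by
    rw [← G.d_comp a x hax, heq, G.d_comp b y hby]
  have hdx : G.d x = (G.d b - G.d a) + G.d y := by
    funext i
    have h2 := congrFun h1 i
    have h3 := hle i
    simp only [Pi.add_apply, Pi.sub_apply] at *
    omega
  obtain ⟨⟨z, w⟩, ⟨hz, hw, hzw, hc⟩, -⟩ := G.factor x (G.d b - G.d a) (G.d y) hdx
  simp only at hz hw hzw hc
  have haz : G.s a = G.r z := by rw [hax, ← hc, G.r_comp z w hzw]
  have hsaz : G.s (G.comp a z) = G.r w := by rw [G.s_comp a z haz, hzw]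
  have hdl : G.d (G.comp b y) = G.d b + G.d y := G.d_comp b y hby
  have hcc : G.comp (G.comp a z) w = G.comp b y := by
    rw [G.comp_assoc a z w haz hzw, hc, heq]
  have hdaz : G.d (G.comp a z) = G.d b := by
    rw [G.d_comp a z haz, hz]
    funext i
    have := hle i
    simp only [Pi.add_apply, Pi.sub_apply]
    omega
  have := factor_unique hdl hdaz hw hsaz hcc rfl rfl hby rfl
  exact ⟨z, haz, this.1, hz⟩

lemma vertex_eq_s {a : G.Path} (h : G.IsVertex a) : G.s a = a := G.s_of_vertex a h
lemma vertex_eq_r {a : G.Path} (h : G.IsVertex a) : G.r a = a := G.r_of_vertex a h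

lemma comp_inj_of_deg_eq {a x b y : G.Path} (hax : G.s a = G.r x)
    (hby : G.s b = G.r y) (heq : G.comp a x = G.comp b y) (hd : G.d a = G.d b) :
    a = b ∧ x = y := by
  obtain ⟨z, haz, hcz, hdz⟩ := nest hax hby heq (fun i => by rw [hd])
  have hzv : G.d z = 0 := by rw [hdz, hd]; simp
  have hz_eq : z = G.s a := by rw [haz, G.r_of_vertex z hzv]
  have hab : a = b := by rw [← hcz, hz_eq, G.comp_id]
  subst hab
  have hdxy : G.d x = G.d y := by
    have h1 : G.d a + G.d x = G.d a + G.d y := by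
      rw [← G.d_comp a x hax, heq, G.d_comp a y hby]
    funext i
    have := congrFun h1 i
    simp only [Pi.add_apply] at this
    omega
  have hdl : G.d (G.comp a y) = G.d a + G.d y := G.d_comp a y hby
  exact ⟨rfl, (factor_unique hdl rfl hdxy hax heq rfl rfl hby rfl).2⟩

lemma comp_left_cancel {a x y : G.Path} (hax : G.s a = G.r x) (hay : G.s a = G.r y)
    (hd : G.d x = G.d y) (heq : G.comp a x = G.comp a y) : x = y :=
  (comp_inj_of_deg_eq hax hay heq rfl).2

lemma pfx_comp_right {a b γ : G.Path} (h : G.Pfx a b) (hbγ : G.s b = G.r γ) :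
    G.Pfx a (G.comp b γ) := by
  obtain ⟨β, hβ1, hβ2⟩ := h
  refine ⟨G.comp β γ, ?_, ?_⟩
  · rw [hβ1, G.r_comp β γ (by rw [← hβ2] at hbγ; rwa [G.s_comp a β hβ1] at hbγ)]
  · rw [← G.comp_assoc a β γ hβ1 (by rw [← hβ2] at hbγ; rwa [G.s_comp a β hβ1] at hbγ), hβ2]

lemma pfx_d_le {a l : G.Path} (h : G.Pfx a l) : ∀ i, G.d a i ≤ G.d l i := by
  obtain ⟨β, hβ1, hβ2⟩ := h
  intro i
  rw [← hβ2, G.d_comp a β hβ1]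
  simp

lemma pfx_refl (a : G.Path) : G.Pfx a a :=
  ⟨G.s a, (G.r_of_vertex (G.s a) (G.d_s a)).symm, G.comp_id a⟩

lemma exists_pfx_of_le {l : G.Path} {n : Fin k → ℕ} (h : ∀ i, n i ≤ G.d l i) :
    ∃ a, G.Pfx a l ∧ G.d a = n := by
  have hd : G.d l = n + (G.d l - n) := by
    funext i; simp only [Pi.add_apply, Pi.sub_apply]; have := h i; omega
  obtain ⟨⟨a, w⟩, ⟨ha, hw, haw, hc⟩, -⟩ := G.factor l n (G.d l - n) hd
  exact ⟨a, ⟨w, haw, hc⟩, ha⟩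

end KGraph
namespace KGraph

variable {k : ℕ} {G : KGraph k}

lemma exists_ultrafilter (hrf : G.RowFiniteNoSources) (ζ : G.Path) :
    ∃ S : Set G.Path, G.IsUltrafilter S ∧ ζ ∈ S := by
  classical
  have hext : ∀ l : G.Path, ∃ e, G.r e = G.s l ∧ G.d e = fun _ => 1 := by
    intro l
    obtain ⟨e, he⟩ := (hrf (G.s l) (G.d_s l) (fun _ => 1)).2
    exact ⟨e, he.1, he.2⟩
  choose e he1 he2 using hext
  set τ : ℕ → G.Path := fun j => Nat.rec ζ (fun _ tt => G.comp tt (e tt)) j with hτ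
  have hτ0 : τ 0 = ζ := rfl
  have hτs : ∀ j, τ (j + 1) = G.comp (τ j) (e (τ j)) := fun j => rfl
  have hse : ∀ l : G.Path, G.s l = G.r (e l) := fun l => (he1 l).symm
  have hdτ : ∀ j, G.d (τ j) = fun i => G.d ζ i + j := by
    intro j
    induction j with
    | zero => simp [hτ0]
    | succ j ih =>
      rw [hτs j, G.d_comp _ _ (hse (τ j)), ih, he2]
      funext i; simp; omega
  set S : Set G.Path := {ν | ∃ j, G.Pfx ν (τ j)} with hS
  have hmono : ∀ ν j, G.Pfx ν (τ j) → G.Pfx ν (τ (j + 1)) := by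
    intro ν j ⟨β, hβ1, hβ2⟩
    have hsβ : G.s β = G.r (e (τ j)) := by
      rw [← G.s_comp ν β hβ1, hβ2]; exact hse (τ j)
    refine ⟨G.comp β (e (τ j)), ?_, ?_⟩
    · rw [hβ1, G.r_comp β _ hsβ]
    · rw [← G.comp_assoc ν β _ hβ1 hsβ, hβ2, hτs]
  have hmono' : ∀ ν i j, i ≤ j → G.Pfx ν (τ i) → G.Pfx ν (τ j) := by
    intro ν i j hij h
    induction j, hij using Nat.le_induction with
    | base => exact h
    | succ j hij ih => exact hmono ν j ih
  refine ⟨S, ⟨⟨?_, ?_⟩, ?_⟩, ⟨0, pfx_refl ζ⟩⟩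
  · -- F1
    rintro l ⟨α, hlα, ⟨j, β, hβ1, hβ2⟩⟩
    have hsα : G.s α = G.r β := by rwa [G.s_comp l α hlα] at hβ1
    refine ⟨j, G.comp α β, ?_, ?_⟩
    · rw [hlα, G.r_comp α β hsα]
    · rw [← G.comp_assoc l α β hlα hsα, hβ2]
  · -- F2
    rintro μ ⟨i, hi⟩ ν ⟨j, hj⟩
    set J := max i j with hJ
    have hμJ : G.Pfx μ (τ J) := hmono' μ i J (le_max_left i j) hi
    have hνJ : G.Pfx ν (τ J) := hmono' ν j J (le_max_right i j) hj
    have hle : ∀ i', (G.d μ ⊔ G.d ν) i' ≤ G.d (τ J) i' := by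
      intro i'
      have h1 := pfx_d_le hμJ i'
      have h2 := pfx_d_le hνJ i'
      simp only [Pi.sup_apply]
      omega
    obtain ⟨κ, hκpfx, hκd⟩ := exists_pfx_of_le hle
    obtain ⟨w, hw1, hw2⟩ := hκpfx
    obtain ⟨βμ, hβμ1, hβμ2⟩ := hμJ
    obtain ⟨βν, hβν1, hβν2⟩ := hνJ
    have hμκ : ∃ z, G.s μ = G.r z ∧ G.comp μ z = κ := by
      obtain ⟨z, hz1, hz2, -⟩ := nest hβμ1 hw1 (hβμ2.trans hw2.symm)
        (fun i' => by rw [hκd]; simp only [Pi.sup_apply]; omega)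
      exact ⟨z, hz1, hz2⟩
    have hνκ : ∃ z, G.s ν = G.r z ∧ G.comp ν z = κ := by
      obtain ⟨z, hz1, hz2, -⟩ := nest hβν1 hw1 (hβν2.trans hw2.symm)
        (fun i' => by rw [hκd]; simp only [Pi.sup_apply]; omega)
      exact ⟨z, hz1, hz2⟩
    exact ⟨κ, ⟨hκd, hμκ, hνκ⟩, ⟨J, w, hw1, hw2⟩⟩
  · -- ultra
    intro n
    set J := ∑ i', n i' with hJ
    have hle : ∀ i', n i' ≤ G.d (τ J) i' := by
      intro i'
      have h1 := congrFun (hdτ J) i'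
      have h2 : n i' ≤ J := Finset.single_le_sum (f := n) (fun _ _ => Nat.zero_le _)
        (Finset.mem_univ i')
      omega
    obtain ⟨a, hapfx, had⟩ := exists_pfx_of_le hle
    exact ⟨a, ⟨J, hapfx⟩, had⟩

lemma pequiv_symm {μ η : G.Path} (hse : G.s η = G.s μ) (h : G.PEquiv μ η) :
    G.PEquiv η μ := by
  intro S hS hmem
  exact (h S hS (by rwa [← hse])).symm

lemma pequiv_prefix (hrf : G.RowFiniteNoSources) {μ η lam ζ : G.Path}
    (hse : G.s η = G.s μ) (hpe : G.PEquiv μ η) (hμζ : G.s μ = G.r ζ)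
    (hd : ∀ i, G.d lam i ≤ G.d ζ i) (h : G.Pfx lam (G.comp μ ζ)) :
    G.Pfx lam (G.comp η ζ) := by
  obtain ⟨S, hS, hζS⟩ := exists_ultrafilter hrf ζ
  have hsμS : G.s μ ∈ S := by
    apply hS.1.1 (G.s μ)
    refine ⟨ζ, ?_, ?_⟩
    · rw [G.s_of_vertex _ (G.d_s μ), hμζ]
    · have : G.comp (G.s μ) ζ = ζ := by rw [hμζ, G.id_comp]
      rw [this]; exact hζS
  have hlm : lam ∈ G.lmap μ S := by
    obtain ⟨α, hα1, hα2⟩ := h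
    exact ⟨ζ, hζS, hμζ, α, hα1, hα2⟩
  rw [hpe S hS hsμS] at hlm
  obtain ⟨tt, httS, hηt, α', hα'1, hα'2⟩ := hlm
  obtain ⟨ρ, ⟨hdρ, ⟨τ₁, hττ₁, hcτ⟩, ⟨ζ₁, hζζ₁, hcζ⟩⟩, hρS⟩ := hS.1.2 tt httS ζ hζS
  -- comp η ρ two ways
  have hsα' : G.s α' = G.r τ₁ := by
    rw [← G.s_comp lam α' hα'1, hα'2, G.s_comp η tt hηt]; exact hττ₁
  have hηζ : G.s η = G.r ζ := by rw [hse, hμζ]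
  have hA : G.comp η ρ = G.comp lam (G.comp α' τ₁) := by
    rw [← hcτ, ← G.comp_assoc η tt τ₁ hηt hττ₁, hα'2.symm,
      G.comp_assoc lam α' τ₁ hα'1 hsα']
  have hB : G.comp η ρ = G.comp (G.comp η ζ) ζ₁ := by
    rw [← hcζ, G.comp_assoc η ζ ζ₁ hηζ hζζ₁]
  have hs1 : G.s lam = G.r (G.comp α' τ₁) := by
    rw [hα'1, G.r_comp α' τ₁ hsα']
  have hs2 : G.s (G.comp η ζ) = G.r ζ₁ := by
    rw [G.s_comp η ζ hηζ]; exact hζζ₁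
  have hle : ∀ i, G.d lam i ≤ G.d (G.comp η ζ) i := by
    intro i
    rw [G.d_comp η ζ hηζ]
    have := hd i
    simp only [Pi.add_apply]
    omega
  obtain ⟨z, hz1, hz2, -⟩ := nest hs1 hs2 (hA.symm.trans hB) hle
  exact ⟨z, hz1, hz2⟩

end KGraph
namespace KGraph

variable {k : ℕ} {G : KGraph k}

lemma mce_finite (hrf : G.RowFiniteNoSources) (μ ν : G.Path) :
    (G.MCE μ ν).Finite := by
  apply Set.Finite.subset (hrf (G.r μ) (G.d_r μ) (G.d μ ⊔ G.d ν)).1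
  rintro l ⟨hdl, ⟨α, hα1, hα2⟩, -⟩
  exact ⟨by rw [← hα2, G.r_comp μ α hα1], hdl⟩

lemma mce_empty_of_ne {μ ν : G.Path} (hd : G.d μ = G.d ν) (hne : μ ≠ ν) :
    G.MCE μ ν = ∅ := by
  ext l
  simp only [Set.mem_empty_iff_false, iff_false]
  rintro ⟨hdl, ⟨α, hα1, hα2⟩, ⟨β, hβ1, hβ2⟩⟩
  have hsup : G.d μ ⊔ G.d ν = G.d μ := by rw [hd]; simp
  have hdα : G.d α = 0 := by
    have h1 : G.d l = G.d μ + G.d α := by rw [← hα2, G.d_comp μ α hα1]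
    rw [hdl, hsup] at h1
    funext i
    have := congrFun h1 i
    simp only [Pi.add_apply, Pi.zero_apply] at *
    omega
  have hdβ : G.d β = 0 := by
    have h1 : G.d l = G.d ν + G.d β := by rw [← hβ2, G.d_comp ν β hβ1]
    rw [hdl, hsup, hd] at h1
    funext i
    have := congrFun h1 i
    simp only [Pi.add_apply, Pi.zero_apply] at *
    omega
  have hlμ : l = μ := by
    rw [← hα2, show α = G.s μ by rw [hα1, G.r_of_vertex α hdα], G.comp_id]
  have hlν : l = ν := by
    rw [← hβ2, show β = G.s ν by rw [hβ1, G.r_of_vertex β hdβ], G.comp_id]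
  exact hne (hlμ ▸ hlν)

section CStarLemmas

variable {A : Type*} [NonUnitalNormedRing A] [StarRing A] [CStarRing A]
  [NormedSpace ℂ A] [IsScalarTower ℂ A A] [SMulCommClass ℂ A A]
  [StarModule ℂ A] [CompleteSpace A]

variable {σ : G.Cocycle} {t : G.Path → A} (ht : G.IsTCK σ t)

/-- shorthand for the range projections -/
local notation "Q" l => t l * star (t l)

lemma c_mul_conj {μ ν : G.Path} (h : G.s μ = G.r ν) :
    σ.c μ ν * star (σ.c μ ν) = 1 := by
  have h1 : ‖σ.c μ ν‖ = 1 := σ.norm_one μ ν h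
  rw [RCLike.star_def, Complex.mul_conj, Complex.normSq_eq_norm_sq, h1]
  norm_num

lemma conj_mul_c {μ ν : G.Path} (h : G.s μ = G.r ν) :
    star (σ.c μ ν) * σ.c μ ν = 1 := by
  rw [mul_comm]; exact c_mul_conj h

include ht

lemma t_mul_s (l : G.Path) : t l * t (G.s l) = t l := by
  have hc := ht.2.2.1 l (G.s l) (G.r_of_vertex (G.s l) (G.d_s l)).symm
  rw [hc, G.comp_id, σ.right_id, one_smul]

lemma r_mul_t (l : G.Path) : t (G.r l) * t l = t l := by
  have hc := ht.2.2.1 (G.r l) l (G.s_of_vertex (G.r l) (G.d_r l))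
  rw [hc, G.id_comp, σ.left_id, one_smul]

lemma st_t (l : G.Path) : star (t l) * t l = t (G.s l) := ht.2.2.2.1 l

lemma star_t_vertex (v : G.Path) (hv : G.IsVertex v) : star (t v) = t v :=
  (ht.1 v hv).1

lemma Q_mul_t (l : G.Path) : (t l * star (t l)) * t l = t l := by
  rw [mul_assoc, st_t ht, t_mul_s ht]

lemma st_mul_Q (l : G.Path) : star (t l) * (t l * star (t l)) = star (t l) := by
  rw [← mul_assoc, st_t ht]
  have : t (G.s l) * star (t l) = star (t l * t (G.s l)) := by
    rw [star_mul, star_t_vertex ht (G.s l) (G.d_s l)]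
  rw [this, t_mul_s ht]

lemma Q_idem (l : G.Path) : (Q l) * (Q l) = Q l := by
  rw [← mul_assoc, Q_mul_t ht]

lemma star_Q (l : G.Path) : star ((Q l) : A) = Q l := by
  rw [star_mul, star_star]

lemma Qc {μ ν : G.Path} (h : G.s μ = G.r ν) :
    (t μ * t ν) * star (t μ * t ν) = Q (G.comp μ ν) := by
  rw [ht.2.2.1 μ ν h, star_smul, smul_mul_smul_comm, c_mul_conj h, one_smul]

lemma conj_comp {μ ν : G.Path} (h : G.s μ = G.r ν) :
    t μ * (Q ν) * star (t μ) = Q (G.comp μ ν) := by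
  rw [← Qc ht h]
  simp only [star_mul, mul_assoc]

lemma st_mul_comp {μ ν : G.Path} (h : G.s μ = G.r ν) :
    star (t μ) * t (G.comp μ ν) = star (σ.c μ ν) • t ν := by
  have h1 : t (G.comp μ ν) = star (σ.c μ ν) • (t μ * t ν) := by
    rw [ht.2.2.1 μ ν h, smul_smul, conj_mul_c h, one_smul]
  rw [h1, mul_smul_comm, ← mul_assoc, st_t ht, h, r_mul_t ht]

lemma sandwich {μ ν : G.Path} (h : G.s μ = G.r ν) :
    star (t μ) * (Q (G.comp μ ν)) * t μ = Q ν := by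
  have h1 : star (t μ) * (Q (G.comp μ ν)) * t μ
      = (star (t μ) * t (G.comp μ ν)) * star (star (t μ) * t (G.comp μ ν)) := by
    simp only [star_mul, star_star, mul_assoc]
  rw [h1, st_mul_comp ht h, star_smul, star_star, smul_mul_smul_comm,
    conj_mul_c h, one_smul]

lemma tck4' {μ ν : G.Path} (F : Finset G.Path) (hF : (F : Set G.Path) = G.MCE μ ν) :
    (Q μ) * (Q ν) = ∑ l ∈ F, Q l := ht.2.2.2.2 μ ν F hF

lemma Q_mul_Q_of_ne {μ ν : G.Path} (hd : G.d μ = G.d ν) (hne : μ ≠ ν) :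
    ((Q μ) : A) * (Q ν) = 0 := by
  have h := tck4' ht (μ := μ) (ν := ν) (∅ : Finset G.Path)
    (by rw [mce_empty_of_ne hd hne]; simp)
  simpa using h

lemma st_mul_t_of_ne {μ ν : G.Path} (hd : G.d μ = G.d ν) (hne : μ ≠ ν) :
    star (t μ) * t ν = 0 := by
  calc star (t μ) * t ν
      = (star (t μ) * (t μ * star (t μ))) * ((t ν * star (t ν)) * t ν) := by
        rw [st_mul_Q ht, Q_mul_t ht]
    _ = star (t μ) * (((t μ * star (t μ)) * (t ν * star (t ν))) * t ν) := by
        simp only [mul_assoc]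
    _ = 0 := by rw [Q_mul_Q_of_ne ht hd hne]; simp

lemma refine_Q (hck : G.IsCKrf σ t) (κ : G.Path) (m : Fin k → ℕ)
    (Fγ : Finset G.Path) (hFγ : (Fγ : Set G.Path) = {γ | G.r γ = G.s κ ∧ G.d γ = m}) :
    ((Q κ) : A) = ∑ γ ∈ Fγ, Q (G.comp κ γ) := by
  have hsum : ∑ γ ∈ Fγ, ((Q γ) : A) = t (G.s κ) := hck.2 (G.s κ) m Fγ (G.d_s κ) hFγ
  have hmem : ∀ γ ∈ Fγ, G.s κ = G.r γ := by
    intro γ hγ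
    have : γ ∈ (Fγ : Set G.Path) := hγ
    rw [hFγ] at this
    exact this.1.symm
  calc (Q κ) = t κ * (t (G.s κ) * star (t κ)) := by
        have h2 : t (G.s κ) * star (t κ) = star (t κ * t (G.s κ)) := by
          rw [star_mul, star_t_vertex ht (G.s κ) (G.d_s κ)]
        rw [h2, t_mul_s ht]
    _ = ∑ γ ∈ Fγ, t κ * ((Q γ) * star (t κ)) := by
        rw [← hsum, Finset.sum_mul, Finset.mul_sum]
    _ = ∑ γ ∈ Fγ, Q (G.comp κ γ) := by
        refine Finset.sum_congr rfl fun γ hγ => ?_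
        rw [← mul_assoc, ← conj_comp ht (hmem γ hγ)]

end CStarLemmas

end KGraph
namespace KGraph

variable {k : ℕ} {G : KGraph k}

open Classical in
/-- The unique `α` with `μα = τ`, when it exists. -/
noncomputable def alphaOf (G : KGraph k) (μ τ : G.Path) : G.Path :=
  if h : ∃ α, G.s μ = G.r α ∧ G.comp μ α = τ then h.choose else τ

lemma alphaOf_spec {μ τ : G.Path} (h : ∃ α, G.s μ = G.r α ∧ G.comp μ α = τ) :
    G.s μ = G.r (G.alphaOf μ τ) ∧ G.comp μ (G.alphaOf μ τ) = τ := by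
  rw [alphaOf, dif_pos h]
  exact h.choose_spec

section CStarLemmas2

variable {A : Type*} [NonUnitalNormedRing A] [StarRing A] [CStarRing A]
  [NormedSpace ℂ A] [IsScalarTower ℂ A A] [SMulCommClass ℂ A A]
  [StarModule ℂ A] [CompleteSpace A]

variable {σ : G.Cocycle} {t : G.Path → A} (ht : G.IsTCK σ t)

include ht

lemma Q_swap_sum {μ lam : G.Path} (F1 : Finset G.Path)
    (hF1 : (F1 : Set G.Path) = G.MCE μ lam) :
    (t lam * star (t lam)) * (t μ * star (t μ)) = ∑ τ ∈ F1, t τ * star (t τ) := by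
  have h2 := tck4' ht F1 hF1
  have h3 := congrArg star h2
  rw [star_mul, star_Q ht, star_Q ht] at h3
  rw [h3, star_sum]
  exact Finset.sum_congr rfl fun τ _ => star_Q ht τ

lemma mce_d {μ lam τ : G.Path} (h : τ ∈ G.MCE μ lam) : G.d τ = G.d μ ⊔ G.d lam := h.1

lemma mce_ne {μ μ' lam : G.Path} (hne : μ ≠ μ') (hd : G.d μ = G.d μ')
    {τ ρ : G.Path} (hτ : τ ∈ G.MCE μ lam) (hρ : ρ ∈ G.MCE μ' lam) : τ ≠ ρ := by
  rintro rfl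
  obtain ⟨-, ⟨α, hα1, hα2⟩, -⟩ := hτ
  obtain ⟨-, ⟨α', hα'1, hα'2⟩, -⟩ := hρ
  exact hne (comp_inj_of_deg_eq hα1 hα'1 (hα2.trans hα'2.symm) hd).1

lemma cross_zero (hrf : G.RowFiniteNoSources) {μ μ' lam : G.Path}
    (hd : G.d μ = G.d μ') (hne : μ ≠ μ') :
    star (t μ) * (t lam * star (t lam)) * t μ' = 0 := by
  set F1 := (mce_finite hrf μ lam).toFinset with hF1def
  set F2 := (mce_finite hrf μ' lam).toFinset with hF2def
  have hF1 : (F1 : Set G.Path) = G.MCE μ lam := Set.Finite.coe_toFinset _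
  have hF2 : (F2 : Set G.Path) = G.MCE μ' lam := Set.Finite.coe_toFinset _
  have h1 := tck4' ht F1 hF1
  have h2' := Q_swap_sum ht (μ := μ') (lam := lam) F2 hF2
  have hM : (t μ * star (t μ)) * (t lam * star (t lam)) * (t μ' * star (t μ')) = 0 := by
    have hstep : (t μ * star (t μ)) * (t lam * star (t lam)) * (t μ' * star (t μ'))
        = ((t μ * star (t μ)) * (t lam * star (t lam)))
          * ((t lam * star (t lam)) * (t μ' * star (t μ'))) := by
      have := Q_idem ht lam
      calc (t μ * star (t μ)) * (t lam * star (t lam)) * (t μ' * star (t μ'))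
          = (t μ * star (t μ)) * ((t lam * star (t lam)) * (t lam * star (t lam)))
            * (t μ' * star (t μ')) := by rw [this]
        _ = _ := by simp only [mul_assoc]
    rw [hstep, h1, h2', Finset.sum_mul_sum]
    apply Finset.sum_eq_zero
    intro τ hτ
    apply Finset.sum_eq_zero
    intro ρ hρ
    have hτ' : τ ∈ G.MCE μ lam := by rw [← hF1]; exact hτ
    have hρ' : ρ ∈ G.MCE μ' lam := by rw [← hF2]; exact hρ
    exact Q_mul_Q_of_ne ht (by rw [mce_d ht hτ', mce_d ht hρ', hd])
      (mce_ne ht hne hd hτ' hρ')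
  calc star (t μ) * (t lam * star (t lam)) * t μ'
      = (star (t μ) * (t μ * star (t μ))) * (t lam * star (t lam))
        * ((t μ' * star (t μ')) * t μ') := by rw [st_mul_Q ht, Q_mul_t ht]
    _ = star (t μ) * ((t μ * star (t μ)) * (t lam * star (t lam))
        * (t μ' * star (t μ')) * t μ') := by simp only [mul_assoc]
    _ = 0 := by rw [hM]; simp

lemma diag_sum (hrf : G.RowFiniteNoSources) {μ lam : G.Path} :
    star (t μ) * (t lam * star (t lam)) * t μ
      = ∑ τ ∈ (mce_finite hrf μ lam).toFinset,
          t (G.alphaOf μ τ) * star (t (G.alphaOf μ τ)) := by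
  set F1 := (mce_finite hrf μ lam).toFinset with hF1def
  have hF1 : (F1 : Set G.Path) = G.MCE μ lam := Set.Finite.coe_toFinset _
  have h1 := tck4' ht F1 hF1
  have h1' := Q_swap_sum ht (μ := μ) (lam := lam) F1 hF1
  have hM : (t μ * star (t μ)) * (t lam * star (t lam)) * (t μ * star (t μ))
      = ∑ τ ∈ F1, t τ * star (t τ) := by
    have hstep : (t μ * star (t μ)) * (t lam * star (t lam)) * (t μ * star (t μ))
        = ((t μ * star (t μ)) * (t lam * star (t lam)))
          * ((t lam * star (t lam)) * (t μ * star (t μ))) := by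
      have := Q_idem ht lam
      calc (t μ * star (t μ)) * (t lam * star (t lam)) * (t μ * star (t μ))
          = (t μ * star (t μ)) * ((t lam * star (t lam)) * (t lam * star (t lam)))
            * (t μ * star (t μ)) := by rw [this]
        _ = _ := by simp only [mul_assoc]
    rw [hstep, h1, h1', Finset.sum_mul_sum]
    refine Finset.sum_congr rfl fun τ hτ => ?_
    have hz : ∀ ρ ∈ F1, ρ ≠ τ →
        (t τ * star (t τ)) * (t ρ * star (t ρ)) = 0 := by
      intro ρ hρ hne
      have hτ' : τ ∈ G.MCE μ lam := by rw [← hF1]; exact hτ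
      have hρ' : ρ ∈ G.MCE μ lam := by rw [← hF1]; exact hρ
      exact Q_mul_Q_of_ne ht (by rw [mce_d ht hτ', mce_d ht hρ']) hne.symm
    rw [Finset.sum_eq_single_of_mem τ hτ hz, Q_idem ht]
  have hQQ : ∀ τ ∈ F1, (t τ * star (t τ)) * (t τ * star (t τ)) = t τ * star (t τ) :=
    fun τ _ => Q_idem ht τ
  calc star (t μ) * (t lam * star (t lam)) * t μ
      = (star (t μ) * (t μ * star (t μ))) * (t lam * star (t lam))
        * ((t μ * star (t μ)) * t μ) := by rw [st_mul_Q ht, Q_mul_t ht]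
    _ = star (t μ) * ((t μ * star (t μ)) * (t lam * star (t lam))
        * (t μ * star (t μ))) * t μ := by simp only [mul_assoc]
    _ = ∑ τ ∈ F1, star (t μ) * (t τ * star (t τ)) * t μ := by
        rw [hM, Finset.mul_sum, Finset.sum_mul]
    _ = ∑ τ ∈ F1, t (G.alphaOf μ τ) * star (t (G.alphaOf μ τ)) := by
        refine Finset.sum_congr rfl fun τ hτ => ?_
        have hτ' : τ ∈ G.MCE μ lam := by rw [← hF1]; exact hτ
        obtain ⟨hs, hc⟩ := alphaOf_spec hτ'.2.1
        have hsw := sandwich ht hs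
        rw [hc] at hsw
        exact hsw

end CStarLemmas2

end KGraph
/-- `V = Σ_{μ ∈ vΛ^p} q_λ t_μ t_{θ(μ)}*` is a unitary of the corner
`q_λ C*(t) q_λ`, when `θ : vΛ^p → vΛ^q` is a bijection with `μ ∼ θ(μ)`. -/
theorem stmt17 {k : ℕ} (G : KGraph k) (hrf : G.RowFiniteNoSources) (σ : G.Cocycle)
    {A : Type*} [NonUnitalNormedRing A] [StarRing A] [CStarRing A]
    [NormedSpace ℂ A] [IsScalarTower ℂ A A] [SMulCommClass ℂ A A]
    [StarModule ℂ A] [CompleteSpace A]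
    (t : G.Path → A) (ht : G.IsCKrf σ t)
    (lam : G.Path) (p q : Fin k → ℕ) (θ : G.Path → G.Path)
    (hθmem : ∀ μ : G.Path, G.r μ = G.r lam → G.d μ = p →
      G.r (θ μ) = G.r lam ∧ G.d (θ μ) = q ∧ G.s (θ μ) = G.s μ ∧ G.PEquiv μ (θ μ))
    (hθinj : ∀ μ μ' : G.Path, G.r μ = G.r lam → G.d μ = p →
      G.r μ' = G.r lam → G.d μ' = p → θ μ = θ μ' → μ = μ')
    (hθsurj : ∀ η : G.Path, G.r η = G.r lam → G.d η = q →
      ∃ μ : G.Path, G.r μ = G.r lam ∧ G.d μ = p ∧ θ μ = η)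
    (F : Finset G.Path)
    (hF : (F : Set G.Path) = {μ | G.r μ = G.r lam ∧ G.d μ = p}) :
    ∀ V : A,
      V = ∑ μ ∈ F, t lam * star (t lam) * (t μ * star (t (θ μ))) →
      V * star V = t lam * star (t lam) ∧ star V * V = t lam * star (t lam) := by
  classical
  intro V hV
  obtain ⟨ht1, hck⟩ := ht
  have ht' : G.IsCKrf σ t := ⟨ht1, hck⟩
  have hvx : G.IsVertex (G.r lam) := G.d_r lam
  have hmemF : ∀ μ ∈ F, G.r μ = G.r lam ∧ G.d μ = p := by
    intro μ hμ
    have h1 : μ ∈ (F : Set G.Path) := hμ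
    rw [hF] at h1
    exact h1
  have hQl_tv : t (G.r lam) * (t lam * star (t lam)) = t lam * star (t lam) := by
    rw [← mul_assoc, KGraph.r_mul_t ht1]
  have htv_Ql : (t lam * star (t lam)) * t (G.r lam) = t lam * star (t lam) := by
    have h1 := congrArg star hQl_tv
    rwa [star_mul, KGraph.star_Q ht1, KGraph.star_t_vertex ht1 _ hvx] at h1
  have hsumF : ∑ μ ∈ F, t μ * star (t μ) = t (G.r lam) := hck (G.r lam) p F hvx hF
  have hstarV : star V = ∑ μ ∈ F, t (θ μ) * star (t μ) * (t lam * star (t lam)) := by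
    rw [hV, star_sum]
    refine Finset.sum_congr rfl fun μ _ => ?_
    simp only [star_mul, star_star, mul_assoc]
  constructor
  · -- V * star V
    rw [hstarV, hV, Finset.sum_mul_sum]
    have hterm : ∀ μ ∈ F,
        ∑ μ' ∈ F, (t lam * star (t lam) * (t μ * star (t (θ μ))))
          * (t (θ μ') * star (t μ') * (t lam * star (t lam)))
        = (t lam * star (t lam)) * (t μ * star (t μ)) * (t lam * star (t lam)) := by
      intro μ hμ
      obtain ⟨hrμ, hdμ⟩ := hmemF μ hμ
      obtain ⟨hrθ, hdθ, hsθ, -⟩ := hθmem μ hrμ hdμ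
      have hz : ∀ μ' ∈ F, μ' ≠ μ →
          (t lam * star (t lam) * (t μ * star (t (θ μ))))
            * (t (θ μ') * star (t μ') * (t lam * star (t lam))) = 0 := by
        intro μ' hμ' hne
        obtain ⟨hrμ', hdμ'⟩ := hmemF μ' hμ'
        obtain ⟨hrθ', hdθ', hsθ', -⟩ := hθmem μ' hrμ' hdμ'
        have hzz : star (t (θ μ)) * t (θ μ') = 0 := by
          refine KGraph.st_mul_t_of_ne ht1 (by rw [hdθ, hdθ']) fun hc => ?_
          exact hne (hθinj μ' μ hrμ' hdμ' hrμ hdμ hc.symm)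
        calc (t lam * star (t lam) * (t μ * star (t (θ μ))))
            * (t (θ μ') * star (t μ') * (t lam * star (t lam)))
            = t lam * (star (t lam) * (t μ * ((star (t (θ μ)) * t (θ μ'))
              * (star (t μ') * (t lam * star (t lam)))))) := by
              simp only [mul_assoc]
          _ = 0 := by rw [hzz]; simp
      rw [Finset.sum_eq_single_of_mem μ hμ hz]
      have h1 : star (t (θ μ)) * (t (θ μ) * (star (t μ) * (t lam * star (t lam))))
          = t (G.s μ) * (star (t μ) * (t lam * star (t lam))) := by
        rw [← mul_assoc (star (t (θ μ))) (t (θ μ)), KGraph.st_t ht1, hsθ]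
      have h2 : t μ * (t (G.s μ) * (star (t μ) * (t lam * star (t lam))))
          = t μ * (star (t μ) * (t lam * star (t lam))) := by
        rw [← mul_assoc (t μ) (t (G.s μ)), KGraph.t_mul_s ht1]
      calc (t lam * star (t lam) * (t μ * star (t (θ μ))))
          * (t (θ μ) * star (t μ) * (t lam * star (t lam)))
          = t lam * (star (t lam) * (t μ * (star (t (θ μ)) * (t (θ μ)
            * (star (t μ) * (t lam * star (t lam))))))) := by simp only [mul_assoc]
        _ = t lam * (star (t lam) * (t μ * (star (t (θ μ)) * t (θ μ)
            * (star (t μ) * (t lam * star (t lam)))))) := by simp only [mul_assoc]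
        _ = t lam * (star (t lam) * (t μ * (t (G.s μ)
            * (star (t μ) * (t lam * star (t lam)))))) := by
            rw [KGraph.st_t ht1, hsθ]
        _ = t lam * (star (t lam) * (t μ * (star (t μ) * (t lam * star (t lam))))) := by
            rw [h2]
        _ = (t lam * star (t lam)) * (t μ * star (t μ)) * (t lam * star (t lam)) := by
            simp only [mul_assoc]
    rw [Finset.sum_congr rfl hterm, ← Finset.sum_mul, ← Finset.mul_sum,
      hsumF, htv_Ql, KGraph.Q_idem ht1]
  · -- star V * V
    set m : Fin k → ℕ := fun i => p i + (max (q i) (G.d lam i) - q i) with hm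
    set N : Fin k → ℕ := fun i => max (p i) (G.d lam i) + max (q i) (G.d lam i) with hN
    set T : G.Path → Finset G.Path := fun μ => (KGraph.mce_finite hrf μ lam).toFinset
      with hT
    set Gg : G.Path → G.Path → Finset G.Path := fun μ τ =>
      ((hrf (G.s (G.alphaOf μ τ)) (G.d_s _) m).1).toFinset with hGg
    set KS : Set G.Path := {κ | (G.r κ = G.r lam ∧ G.d κ = N) ∧ G.Pfx lam κ} with hKS
    have hKSfin : KS.Finite := ((hrf (G.r lam) hvx N).1).subset (fun κ hκ => hκ.1)
    set K : Finset G.Path := hKSfin.toFinset with hK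
    -- data for indices
    have hdata : ∀ μ ∈ F, ∀ τ ∈ T μ,
        G.s μ = G.r (G.alphaOf μ τ) ∧ G.comp μ (G.alphaOf μ τ) = τ ∧
        (∀ i, G.d (G.alphaOf μ τ) i = max (p i) (G.d lam i) - p i) ∧
        G.Pfx lam τ := by
      intro μ hμ τ hτ
      obtain ⟨hrμ, hdμ⟩ := hmemF μ hμ
      have hτm : τ ∈ G.MCE μ lam := (Set.Finite.mem_toFinset _).1 hτ
      obtain ⟨hsα, hcα⟩ := KGraph.alphaOf_spec hτm.2.1
      refine ⟨hsα, hcα, ?_, ?_⟩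
      · intro i
        have h1 := congrFun (G.d_comp μ (G.alphaOf μ τ) hsα) i
        rw [hcα] at h1
        have h2 := congrFun hτm.1 i
        have h3 := congrFun hdμ i
        simp only [Pi.add_apply, Pi.sup_apply] at h1 h2
        omega
      · obtain ⟨-, -, β, hβ1, hβ2⟩ := hτm
        exact ⟨β, hβ1, hβ2⟩
    -- main expansion
    have hmain : star V * V = ∑ μ ∈ F, ∑ τ ∈ T μ, ∑ γ ∈ Gg μ τ,
        t (G.comp (G.comp (θ μ) (G.alphaOf μ τ)) γ)
          * star (t (G.comp (G.comp (θ μ) (G.alphaOf μ τ)) γ)) := by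
      rw [hstarV, hV, Finset.sum_mul_sum]
      refine Finset.sum_congr rfl fun μ hμ => ?_
      obtain ⟨hrμ, hdμ⟩ := hmemF μ hμ
      obtain ⟨hrθ, hdθ, hsθ, -⟩ := hθmem μ hrμ hdμ
      have hz : ∀ μ' ∈ F, μ' ≠ μ → (t (θ μ) * star (t μ) * (t lam * star (t lam)))
          * (t lam * star (t lam) * (t μ' * star (t (θ μ')))) = 0 := by
        intro μ' hμ' hne
        obtain ⟨hrμ', hdμ'⟩ := hmemF μ' hμ'
        have hcz : star (t μ) * (t lam * star (t lam)) * t μ' = 0 :=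
          KGraph.cross_zero ht1 hrf (by rw [hdμ, hdμ']) hne.symm
        have h0 : star (t μ) * (t lam * star (t lam)) * ((t lam * star (t lam)) * t μ') = 0 := by
          have e : star (t μ) * (t lam * star (t lam)) * ((t lam * star (t lam)) * t μ')
              = star (t μ) * ((t lam * star (t lam)) * (t lam * star (t lam))) * t μ' := by
            simp only [mul_assoc]
          rw [e, KGraph.Q_idem ht1]
          exact hcz
        calc (t (θ μ) * star (t μ) * (t lam * star (t lam)))
            * (t lam * star (t lam) * (t μ' * star (t (θ μ'))))
            = t (θ μ) * ((star (t μ) * (t lam * star (t lam))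
              * ((t lam * star (t lam)) * t μ')) * star (t (θ μ'))) := by
              simp only [mul_assoc]
          _ = 0 := by rw [h0]; simp
      rw [Finset.sum_eq_single_of_mem μ hμ hz]
      have h0 : star (t μ) * (t lam * star (t lam)) * ((t lam * star (t lam)) * t μ)
          = ∑ τ ∈ T μ, t (G.alphaOf μ τ) * star (t (G.alphaOf μ τ)) := by
        have e : star (t μ) * (t lam * star (t lam)) * ((t lam * star (t lam)) * t μ)
            = star (t μ) * ((t lam * star (t lam)) * (t lam * star (t lam))) * t μ := by
          simp only [mul_assoc]
        rw [e, KGraph.Q_idem ht1]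
        exact KGraph.diag_sum ht1 hrf
      calc (t (θ μ) * star (t μ) * (t lam * star (t lam)))
          * (t lam * star (t lam) * (t μ * star (t (θ μ))))
          = t (θ μ) * ((star (t μ) * (t lam * star (t lam))
            * ((t lam * star (t lam)) * t μ)) * star (t (θ μ))) := by
            simp only [mul_assoc]
        _ = ∑ τ ∈ T μ, t (θ μ) * ((t (G.alphaOf μ τ) * star (t (G.alphaOf μ τ)))
            * star (t (θ μ))) := by
            rw [h0, Finset.sum_mul, Finset.mul_sum]
        _ = ∑ τ ∈ T μ, ∑ γ ∈ Gg μ τ,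
            t (G.comp (G.comp (θ μ) (G.alphaOf μ τ)) γ)
              * star (t (G.comp (G.comp (θ μ) (G.alphaOf μ τ)) γ)) := by
            refine Finset.sum_congr rfl fun τ hτ => ?_
            obtain ⟨hsα, hcα, hdα, -⟩ := hdata μ hμ τ hτ
            have hsθα : G.s (θ μ) = G.r (G.alphaOf μ τ) := by rw [hsθ, hsα]
            rw [← mul_assoc, KGraph.conj_comp ht1 hsθα]
            refine KGraph.refine_Q ht1 ht' (G.comp (θ μ) (G.alphaOf μ τ)) m _ ?_
            rw [G.s_comp _ _ hsθα]
            exact Set.Finite.coe_toFinset _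
    -- Step A : q_lam as a sum over K
    have hdlN : ∀ i, G.d lam i ≤ N i := by
      intro i; simp only [hN]; omega
    have hqN : ∀ i, q i ≤ N i := by
      intro i; simp only [hN]; omega
    have hFb : ((((hrf (G.s lam) (G.d_s lam) (fun i => N i - G.d lam i)).1).toFinset :
          Finset G.Path) : Set G.Path)
        = {β | G.r β = G.s lam ∧ G.d β = fun i => N i - G.d lam i} :=
      Set.Finite.coe_toFinset _
    have hLb := KGraph.refine_Q ht1 ht' lam (fun i => N i - G.d lam i) _ hFb
    have hstepA : t lam * star (t lam) = ∑ κ ∈ K, t κ * star (t κ) := by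
      rw [hLb]
      refine Finset.sum_nbij (G.comp lam) ?_ ?_ ?_ ?_
      · intro β hβ
        have hβ' : β ∈ {l : G.Path | G.r l = G.s lam ∧ G.d l = fun i => N i - G.d lam i} := by
          rwa [Set.Finite.mem_toFinset] at hβ
        have hsl : G.s lam = G.r β := hβ'.1.symm
        rw [hK, Set.Finite.mem_toFinset]
        refine ⟨⟨G.r_comp lam β hsl, ?_⟩, ⟨β, hsl, rfl⟩⟩
        · rw [G.d_comp lam β hsl, hβ'.2]
          funext i
          simp only [Pi.add_apply]
          have := hdlN i
          omega
      · intro β1 h1 β2 h2 he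
        have hβ1 : β1 ∈ {l : G.Path | G.r l = G.s lam ∧ G.d l = fun i => N i - G.d lam i} := by
          rwa [Finset.mem_coe, Set.Finite.mem_toFinset] at h1
        have hβ2 : β2 ∈ {l : G.Path | G.r l = G.s lam ∧ G.d l = fun i => N i - G.d lam i} := by
          rwa [Finset.mem_coe, Set.Finite.mem_toFinset] at h2
        exact KGraph.comp_left_cancel hβ1.1.symm hβ2.1.symm
          (hβ1.2.trans hβ2.2.symm) he
      · intro κ hκ
        have hκ' : κ ∈ KS := (Set.Finite.mem_toFinset _).1 hκ
        obtain ⟨⟨hrκ, hdκ⟩, β, hb1, hb2⟩ := hκ'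
        refine ⟨β, ?_, hb2⟩
        rw [Finset.mem_coe, Set.Finite.mem_toFinset]
        refine ⟨hb1.symm, ?_⟩
        have hdd : G.d κ = G.d lam + G.d β := by rw [← hb2, G.d_comp lam β hb1]
        funext i
        have h1 := congrFun hdd i
        have h2 := congrFun hdκ i
        simp only [Pi.add_apply] at h1
        show G.d β i = N i - G.d lam i
        omega
      · intro β hβ; rfl
    -- Step B : triple sum equals sum over K
    have hstepB : (∑ μ ∈ F, ∑ τ ∈ T μ, ∑ γ ∈ Gg μ τ,
        t (G.comp (G.comp (θ μ) (G.alphaOf μ τ)) γ)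
          * star (t (G.comp (G.comp (θ μ) (G.alphaOf μ τ)) γ)))
        = ∑ κ ∈ K, t κ * star (t κ) := by
      have e1 : ∀ μ ∈ F, (∑ τ ∈ T μ, ∑ γ ∈ Gg μ τ,
          t (G.comp (G.comp (θ μ) (G.alphaOf μ τ)) γ)
            * star (t (G.comp (G.comp (θ μ) (G.alphaOf μ τ)) γ)))
          = ∑ y ∈ (T μ).sigma (Gg μ),
              t (G.comp (G.comp (θ μ) (G.alphaOf μ y.1)) y.2)
                * star (t (G.comp (G.comp (θ μ) (G.alphaOf μ y.1)) y.2)) :=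
        fun μ _ => Finset.sum_sigma' (T μ) (Gg μ) _
      rw [Finset.sum_congr rfl e1, Finset.sum_sigma' F (fun μ => (T μ).sigma (Gg μ)) _]
      refine Finset.sum_nbij
        (fun x => G.comp (G.comp (θ x.1) (G.alphaOf x.1 x.2.1)) x.2.2) ?_ ?_ ?_ ?_
      · -- maps into K
        rintro ⟨μ, τ, γ⟩ hx
        rw [Finset.mem_sigma, Finset.mem_sigma] at hx
        obtain ⟨hμ, hτ, hγ⟩ := hx
        obtain ⟨hrμ, hdμ⟩ := hmemF μ hμ
        obtain ⟨hrθ, hdθ, hsθ, hpe⟩ := hθmem μ hrμ hdμ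
        obtain ⟨hsα, hcα, hdα, hpfxτ⟩ := hdata μ hμ τ hτ
        have hγ' : γ ∈ {l : G.Path | G.r l = G.s (G.alphaOf μ τ) ∧ G.d l = m} := by
          rwa [Set.Finite.mem_toFinset] at hγ
        have hsαγ : G.s (G.alphaOf μ τ) = G.r γ := hγ'.1.symm
        have hsθα : G.s (θ μ) = G.r (G.alphaOf μ τ) := by rw [hsθ, hsα]
        have hsμζ : G.s μ = G.r (G.comp (G.alphaOf μ τ) γ) := by
          rw [G.r_comp _ _ hsαγ]; exact hsα
        have hdζ : ∀ i, G.d (G.comp (G.alphaOf μ τ) γ) i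
            = (max (p i) (G.d lam i) - p i) + m i := by
          intro i
          have h1 := congrFun (G.d_comp _ _ hsαγ) i
          have h2 := congrFun hγ'.2 i
          simp only [Pi.add_apply] at h1
          rw [h1, hdα i, h2]
        have hdlζ : ∀ i, G.d lam i ≤ G.d (G.comp (G.alphaOf μ τ) γ) i := by
          intro i; rw [hdζ i]; simp only [hm]; omega
        have hsτγ : G.s τ = G.r γ := by
          rw [← hcα, G.s_comp μ _ hsα]; exact hsαγ
        have hctg : G.comp τ γ = G.comp μ (G.comp (G.alphaOf μ τ) γ) := by
          rw [← G.comp_assoc μ _ γ hsα hsαγ, hcα]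
        have hPμζ : G.Pfx lam (G.comp μ (G.comp (G.alphaOf μ τ) γ)) := by
          rw [← hctg]
          exact KGraph.pfx_comp_right hpfxτ hsτγ
        have hPθζ : G.Pfx lam (G.comp (θ μ) (G.comp (G.alphaOf μ τ) γ)) :=
          KGraph.pequiv_prefix hrf hsθ hpe hsμζ hdlζ hPμζ
        have hccc : G.comp (G.comp (θ μ) (G.alphaOf μ τ)) γ
            = G.comp (θ μ) (G.comp (G.alphaOf μ τ) γ) :=
          G.comp_assoc (θ μ) _ γ hsθα hsαγ
        rw [hK, Set.Finite.mem_toFinset]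
        refine ⟨⟨?_, ?_⟩, ?_⟩
        · rw [G.r_comp _ γ (by rw [G.s_comp _ _ hsθα]; exact hsαγ),
            G.r_comp _ _ hsθα, hrθ]
        · funext i
          have h1 := congrFun (G.d_comp _ γ
            (by rw [G.s_comp _ _ hsθα]; exact hsαγ)) i
          have h2 := congrFun (G.d_comp _ _ hsθα) i
          have h3 := congrFun hdθ i
          have h4 := hdα i
          have h5 := congrFun hγ'.2 i
          simp only [Pi.add_apply] at h1 h2
          rw [h1, h2, h3, h4, h5]
          simp only [hm, hN]
          omega
        · show G.Pfx lam (G.comp (G.comp (θ μ) (G.alphaOf μ τ)) γ)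
          rw [hccc]; exact hPθζ
      · -- injective
        rintro ⟨μ, τ, γ⟩ hx ⟨μ', τ', γ'⟩ hx' heq
        have hx1 := Finset.mem_coe.1 hx
        have hx1' := Finset.mem_coe.1 hx'
        rw [Finset.mem_sigma, Finset.mem_sigma] at hx1 hx1'
        obtain ⟨hμ, hτ, hγ⟩ := hx1
        obtain ⟨hμ', hτ', hγ'⟩ := hx1'
        obtain ⟨hrμ, hdμ⟩ := hmemF μ hμ
        obtain ⟨hrμ', hdμ'⟩ := hmemF μ' hμ'
        obtain ⟨hrθ, hdθ, hsθ, -⟩ := hθmem μ hrμ hdμ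
        obtain ⟨hrθ', hdθ', hsθ', -⟩ := hθmem μ' hrμ' hdμ'
        obtain ⟨hsα, hcα, hdα, -⟩ := hdata μ hμ τ hτ
        obtain ⟨hsα', hcα', hdα', -⟩ := hdata μ' hμ' τ' hτ'
        have hγm : γ ∈ {l : G.Path | G.r l = G.s (G.alphaOf μ τ) ∧ G.d l = m} := by
          rwa [Set.Finite.mem_toFinset] at hγ
        have hγm' : γ' ∈ {l : G.Path | G.r l = G.s (G.alphaOf μ' τ') ∧ G.d l = m} := by
          rwa [Set.Finite.mem_toFinset] at hγ'
        have hsθα : G.s (θ μ) = G.r (G.alphaOf μ τ) := by rw [hsθ, hsα]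
        have hsθα' : G.s (θ μ') = G.r (G.alphaOf μ' τ') := by rw [hsθ', hsα']
        have hscθα : G.s (G.comp (θ μ) (G.alphaOf μ τ)) = G.r γ := by
          rw [G.s_comp _ _ hsθα, hγm.1]
        have hscθα' : G.s (G.comp (θ μ') (G.alphaOf μ' τ')) = G.r γ' := by
          rw [G.s_comp _ _ hsθα', hγm'.1]
        have hdeq : G.d (G.comp (θ μ) (G.alphaOf μ τ))
            = G.d (G.comp (θ μ') (G.alphaOf μ' τ')) := by
          rw [G.d_comp _ _ hsθα, G.d_comp _ _ hsθα']
          funext i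
          simp only [Pi.add_apply]
          rw [congrFun hdθ i, congrFun hdθ' i, hdα i, hdα' i]
        have h1 := KGraph.comp_inj_of_deg_eq hscθα hscθα' heq hdeq
        have h2 := KGraph.comp_inj_of_deg_eq hsθα hsθα' h1.1 (by rw [hdθ, hdθ'])
        have hμeq : μ = μ' := hθinj μ μ' hrμ hdμ hrμ' hdμ' h2.1
        subst hμeq
        have hτeq : τ = τ' := by rw [← hcα, ← hcα', h2.2]
        subst hτeq
        have hγeq : γ = γ' := h1.2
        subst hγeq
        rfl
      · -- surjective
        intro κ hκ
        have hκK : κ ∈ K := Finset.mem_coe.1 hκ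
        rw [hK, Set.Finite.mem_toFinset] at hκK
        obtain ⟨⟨hrκ, hdκ⟩, hpfx⟩ := hκK
        have hdκq : G.d κ = q + fun i => N i - q i := by
          funext i
          have h2 := congrFun hdκ i
          simp only [Pi.add_apply]
          have := hqN i
          omega
        obtain ⟨⟨η, ζ⟩, ⟨hdη, hdζ, hsηζ, hcηζ⟩, -⟩ :=
          G.factor κ q (fun i => N i - q i) hdκq
        simp only at hdη hdζ hsηζ hcηζ
        have hrη : G.r η = G.r lam := by
          rw [← hrκ, ← hcηζ, G.r_comp η ζ hsηζ]
        obtain ⟨μ, hrμ, hdμ, hθμ⟩ := hθsurj η hrη hdη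
        obtain ⟨hrθ, hdθ, hsθ, hpe⟩ := hθmem μ hrμ hdμ
        have hμF : μ ∈ F := by
          rw [← Finset.mem_coe, hF]; exact ⟨hrμ, hdμ⟩
        have hsμζ : G.s μ = G.r ζ := by rw [← hsθ, hθμ]; exact hsηζ
        have hdlζ : ∀ i, G.d lam i ≤ G.d ζ i := by
          intro i
          have h1 : G.d ζ i = N i - q i := congrFun hdζ i
          simp only [hN] at h1
          omega
        have hPηζ : G.Pfx lam (G.comp (θ μ) ζ) := by rw [hθμ, hcηζ]; exact hpfx
        have hPμζ : G.Pfx lam (G.comp μ ζ) := by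
          refine KGraph.pequiv_prefix hrf hsθ.symm (KGraph.pequiv_symm hsθ hpe)
            ?_ hdlζ hPηζ
          rw [hsθ]; exact hsμζ
        have hdζ2 : G.d ζ = (fun i => max (p i) (G.d lam i) - p i) + m := by
          funext i
          have h1 : G.d ζ i = N i - q i := congrFun hdζ i
          simp only [Pi.add_apply, hm, hN] at h1 ⊢
          omega
        obtain ⟨⟨α, γ⟩, ⟨hdα, hdγ, hsαγ, hcαγ⟩, -⟩ :=
          G.factor ζ (fun i => max (p i) (G.d lam i) - p i) m hdζ2
        simp only at hdα hdγ hsαγ hcαγ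
        have hsμα : G.s μ = G.r α := by
          rw [hsμζ, ← hcαγ, G.r_comp α γ hsαγ]
        have hsτγ : G.s (G.comp μ α) = G.r γ := by
          rw [G.s_comp μ α hsμα]; exact hsαγ
        have hcμζ : G.comp μ ζ = G.comp (G.comp μ α) γ := by
          rw [← hcαγ, G.comp_assoc μ α γ hsμα hsαγ]
        have hdτ : G.d (G.comp μ α) = G.d μ ⊔ G.d lam := by
          rw [G.d_comp μ α hsμα]
          funext i
          have h3 := congrFun hdμ i
          have h4 : G.d α i = max (p i) (G.d lam i) - p i := congrFun hdα i
          simp only [Pi.add_apply, Pi.sup_apply]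
          omega
        have hpfxτ : G.Pfx lam (G.comp μ α) := by
          obtain ⟨w, hw1, hw2⟩ := hPμζ
          rw [hcμζ] at hw2
          obtain ⟨z, hz1, hz2, -⟩ := KGraph.nest hw1 hsτγ hw2 (fun i => by
            have h5 := congrFun hdτ i
            simp only [Pi.sup_apply] at h5
            omega)
          exact ⟨z, hz1, hz2⟩
        have hτT : G.comp μ α ∈ T μ := by
          show G.comp μ α ∈ (KGraph.mce_finite hrf μ lam).toFinset
          rw [Set.Finite.mem_toFinset]
          refine ⟨hdτ, ⟨α, hsμα, rfl⟩, ?_⟩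
          obtain ⟨z, hz1, hz2⟩ := hpfxτ
          exact ⟨z, hz1, hz2⟩
        have hαeq : G.alphaOf μ (G.comp μ α) = α := by
          obtain ⟨hs1, hc1⟩ := KGraph.alphaOf_spec (⟨α, hsμα, rfl⟩ :
            ∃ α', G.s μ = G.r α' ∧ G.comp μ α' = G.comp μ α)
          have hdd : G.d (G.alphaOf μ (G.comp μ α)) = G.d α := by
            have e1 := G.d_comp μ _ hs1
            rw [hc1] at e1
            have e2 := G.d_comp μ α hsμα
            funext i
            have e3 := congrFun e1 i
            have e4 := congrFun e2 i
            rw [e4] at e3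
            simp only [Pi.add_apply] at e3
            omega
          exact KGraph.comp_left_cancel hs1 hsμα hdd hc1
        have hγG : γ ∈ Gg μ (G.comp μ α) := by
          show γ ∈ Set.Finite.toFinset _
          rw [Set.Finite.mem_toFinset]
          exact ⟨by rw [hαeq]; exact hsαγ.symm, hdγ⟩
        have hsηα : G.s η = G.r α := by
          rw [hsηζ, ← hcαγ, G.r_comp α γ hsαγ]
        refine ⟨⟨μ, G.comp μ α, γ⟩, ?_, ?_⟩
        · rw [Finset.mem_coe, Finset.mem_sigma, Finset.mem_sigma]
          exact ⟨hμF, hτT, hγG⟩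
        · show G.comp (G.comp (θ μ) (G.alphaOf μ (G.comp μ α))) γ = κ
          rw [hαeq, hθμ, G.comp_assoc η α γ hsηα hsαγ, hcαγ, hcηζ]
      · rintro ⟨μ, τ, γ⟩ hx; rfl
    rw [hmain, hstepB]
    exact hstepA.symm
end
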